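/- Let A be an s × k random matrix with i.i.d. N(0,1) entries. Then with probability at least 1 − k·e^{−s}, every x ∈ ℝᵏ satisfies ‖Ax‖₁ ≤ 2s·‖x‖₁ (equivalently, sup_{x ≠ 0} ‖Ax‖₁/‖x‖₁ ≤ 2s). -/

import Mathlib

open MeasureTheory ProbabilityTheory Real ENNReal

lemma lintegral_pi_prod {E : Type*} [MeasurableSpace E] (m : Measure E) [SigmaFinite m] :
    ∀ {n : ℕ} (f : Fin n → E → ℝ≥0∞), (∀ i, Measurable (f i)) →
    ∫⁻ x : Fin n → E, ∏ i, f i (x i) ∂(Measure.pi fun _ => m) = ∏ i, ∫⁻ x, f i x ∂m := by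
  intro n
  induction n with
  | zero =>
    intro f hf
    simp [MeasureTheory.Measure.pi_empty_univ]
  | succ n ih =>
    intro f hf
    have hmp := (measurePreserving_piFinSuccAbove (fun _ : Fin (n+1) => m) 0).symm
    have hF : Measurable fun x : Fin (n+1) → E => ∏ i, f i (x i) :=
      Finset.measurable_prod _ fun i _ => (hf i).comp (measurable_pi_apply i)
    rw [← hmp.lintegral_comp hF]
    have key : ∀ y : E × (Fin n → E),
        (∏ i, f i (((MeasurableEquiv.piFinSuccAbove (fun _ => E) 0).symm y) i))
        = f 0 y.1 * ∏ j : Fin n, f j.succ (y.2 j) := by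
      intro y
      rw [Fin.prod_univ_succ]
      simp [MeasurableEquiv.piFinSuccAbove_symm_apply, Fin.zero_succAbove]
    simp_rw [key]
    have hg : Measurable fun b : Fin n → E => ∏ j : Fin n, f j.succ (b j) :=
      Finset.measurable_prod _ fun j _ => (hf j.succ).comp (measurable_pi_apply j)
    rw [lintegral_prod_mul (hf 0).aemeasurable hg.aemeasurable,
      ih _ (fun j => hf j.succ), Fin.prod_univ_succ]

lemma gauss_exp_abs_bound :
    ∫⁻ x, ENNReal.ofReal (rexp (2 * |x|)) ∂(gaussianReal 0 1)
      ≤ ENNReal.ofReal (2 * rexp 2) := by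
  have h1 : (1 : NNReal) ≠ 0 := one_ne_zero
  rw [gaussianReal_of_var_ne_zero 0 h1,
    lintegral_withDensity_eq_lintegral_mul _ (measurable_gaussianPDF 0 1)
      (show Measurable fun x : ℝ => ENNReal.ofReal (rexp (2 * |x|)) from
        (measurable_const.mul measurable_abs).exp.ennreal_ofReal)]
  have hpt : ∀ x : ℝ, gaussianPDF 0 1 x * ENNReal.ofReal (rexp (2 * |x|))
      ≤ ENNReal.ofReal (rexp 2) * (gaussianPDF 2 1 x + gaussianPDF (-2) 1 x) := by
    intro x
    rw [gaussianPDF, gaussianPDF, gaussianPDF, ← ENNReal.ofReal_mul (gaussianPDFReal_nonneg _ _ _),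
      ← ENNReal.ofReal_add (gaussianPDFReal_nonneg _ _ _) (gaussianPDFReal_nonneg _ _ _),
      ← ENNReal.ofReal_mul (exp_nonneg 2)]
    apply ENNReal.ofReal_le_ofReal
    simp only [gaussianPDFReal, NNReal.coe_one, mul_one]
    have hc : (0:ℝ) ≤ (√(2 * π))⁻¹ := by positivity
    have key : rexp (-(x - 0) ^ 2 / 2) * rexp (2 * |x|)
        ≤ rexp 2 * rexp (-(x - 2) ^ 2 / 2) + rexp 2 * rexp (-(x - -2) ^ 2 / 2) := by
      rw [← exp_add, ← exp_add, ← exp_add]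
      rcases le_or_gt 0 x with hx | hx
      · have h : rexp (-(x - 0) ^ 2 / 2 + 2 * |x|) = rexp (2 + -(x - 2) ^ 2 / 2) := by
          rw [abs_of_nonneg hx]; congr 1; ring
        rw [h]
        exact le_add_of_nonneg_right (exp_pos _).le
      · have h : rexp (-(x - 0) ^ 2 / 2 + 2 * |x|) = rexp (2 + -(x - -2) ^ 2 / 2) := by
          rw [abs_of_neg hx]; congr 1; ring
        rw [h]
        exact le_add_of_nonneg_left (exp_pos _).le
    nlinarith [mul_le_mul_of_nonneg_left key hc]
  calc ∫⁻ x, gaussianPDF 0 1 x * ENNReal.ofReal (rexp (2 * |x|))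
      ≤ ∫⁻ x, ENNReal.ofReal (rexp 2) * (gaussianPDF 2 1 x + gaussianPDF (-2) 1 x) :=
        lintegral_mono hpt
    _ = ENNReal.ofReal (rexp 2) * ((∫⁻ x, gaussianPDF 2 1 x) + ∫⁻ x, gaussianPDF (-2) 1 x) := by
        rw [lintegral_const_mul _ (show Measurable fun x => gaussianPDF 2 1 x + gaussianPDF (-2) 1 x from
            (measurable_gaussianPDF 2 1).add (measurable_gaussianPDF (-2) 1)),
          lintegral_add_left (measurable_gaussianPDF 2 1)]
    _ = ENNReal.ofReal (rexp 2) * 2 := by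
        rw [lintegral_gaussianPDF_eq_one 2 h1, lintegral_gaussianPDF_eq_one (-2) h1]; norm_num
    _ = ENNReal.ofReal (2 * rexp 2) := by
        rw [mul_comm (2:ℝ), ENNReal.ofReal_mul (exp_nonneg 2), ENNReal.ofReal_ofNat]


noncomputable def stdGaussianMatrix' (s k : ℕ) : Measure (Fin s → Fin k → ℝ) :=
  Measure.pi fun _ => Measure.pi fun _ => gaussianReal 0 1

lemma column_tail_bound (s k : ℕ) (j : Fin k) :
    stdGaussianMatrix' s k {A : Fin s → Fin k → ℝ | 2 * (s:ℝ) < ∑ i, |A i j|}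
      ≤ ENNReal.ofReal (rexp (-(s:ℝ))) := by
  set μ := gaussianReal 0 1
  set g : ℝ → ℝ≥0∞ := fun t => ENNReal.ofReal (rexp (2 * |t|)) with hg
  have hgm : Measurable g := ((measurable_const.mul measurable_abs).exp).ennreal_ofReal
  -- inner integral over a row
  have hrow : ∫⁻ row : Fin k → ℝ, g (row j) ∂(Measure.pi fun _ => μ) = ∫⁻ t, g t ∂μ := by
    have key := lintegral_pi_prod μ (fun j' => if j' = j then g else fun _ => 1)
      (fun j' => by
        rcases eq_or_ne j' j with h | h
        · simpa [h] using hgm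
        · simp only [h, if_false]; exact measurable_const)
    simp only [apply_ite (fun h : ℝ → ℝ≥0∞ => ∫⁻ t, h t ∂μ), lintegral_one,
      measure_univ, Finset.prod_ite_eq', Finset.mem_univ, if_true] at key
    rw [← key]
    refine lintegral_congr fun row => ?_
    have hb : ∀ j' : Fin k, ((if j' = j then g else fun _ => (1:ℝ≥0∞)) (row j'))
        = if j' = j then g (row j') else 1 := fun j' => by split <;> rfl
    simp only [hb, Finset.prod_ite_eq', Finset.mem_univ, if_true]
  -- total integral
  set F : (Fin s → Fin k → ℝ) → ℝ≥0∞ := fun A => ∏ i, g (A i j) with hF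
  have hFm : Measurable F :=
    Finset.measurable_prod _ fun i _ =>
      hgm.comp ((measurable_pi_apply j).comp (measurable_pi_apply i))
  have hFint : ∫⁻ A, F A ∂(stdGaussianMatrix' s k) ≤ ENNReal.ofReal ((2 * rexp 2) ^ s) := by
    rw [show (stdGaussianMatrix' s k) = Measure.pi fun _ : Fin s => Measure.pi fun _ : Fin k => μ
        from rfl]
    rw [lintegral_pi_prod _ (fun _ : Fin s => fun row : Fin k → ℝ => g (row j))
      (fun _ => hgm.comp (measurable_pi_apply j))]
    simp only [hrow, Finset.prod_const, Finset.card_univ, Fintype.card_fin]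
    rw [ENNReal.ofReal_pow (by positivity : (0:ℝ) ≤ 2 * rexp 2)]
    exact pow_le_pow_left' gauss_exp_abs_bound s
  -- Markov
  have hsub : {A : Fin s → Fin k → ℝ | 2 * (s:ℝ) < ∑ i, |A i j|}
      ⊆ {A | ENNReal.ofReal (rexp (4 * (s:ℝ))) ≤ F A} := by
    intro A hA
    have : F A = ENNReal.ofReal (rexp (2 * ∑ i, |A i j|)) := by
      simp only [hF, hg]
      rw [← ENNReal.ofReal_prod_of_nonneg (fun _ _ => (exp_nonneg _)), ← Real.exp_sum,
        Finset.mul_sum]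
    rw [Set.mem_setOf_eq, this]
    apply ENNReal.ofReal_le_ofReal
    apply Real.exp_le_exp.2
    have := hA
    simp only [Set.mem_setOf_eq] at this
    nlinarith
  have hmarkov := mul_meas_ge_le_lintegral₀ (μ := stdGaussianMatrix' s k)
    hFm.aemeasurable (ENNReal.ofReal (rexp (4 * (s:ℝ))))
  have h1 : stdGaussianMatrix' s k {A : Fin s → Fin k → ℝ | 2 * (s:ℝ) < ∑ i, |A i j|}
      ≤ ENNReal.ofReal ((2 * rexp 2) ^ s) / ENNReal.ofReal (rexp (4 * (s:ℝ))) := by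
    rw [ENNReal.le_div_iff_mul_le (Or.inl (by simp [Real.exp_pos])) (Or.inl ENNReal.ofReal_ne_top)]
    calc stdGaussianMatrix' s k {A | 2 * (s:ℝ) < ∑ i, |A i j|}
          * ENNReal.ofReal (rexp (4 * (s:ℝ)))
        ≤ stdGaussianMatrix' s k {A | ENNReal.ofReal (rexp (4 * (s:ℝ))) ≤ F A}
          * ENNReal.ofReal (rexp (4 * (s:ℝ))) := by
          gcongr

      _ = ENNReal.ofReal (rexp (4 * (s:ℝ)))
          * stdGaussianMatrix' s k {A | ENNReal.ofReal (rexp (4 * (s:ℝ))) ≤ F A} := mul_comm _ _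
      _ ≤ ∫⁻ A, F A ∂(stdGaussianMatrix' s k) := hmarkov
      _ ≤ ENNReal.ofReal ((2 * rexp 2) ^ s) := hFint
  refine h1.trans ?_
  rw [← ENNReal.ofReal_div_of_pos (Real.exp_pos _)]
  apply ENNReal.ofReal_le_ofReal
  have h2e : 2 * rexp 2 ≤ rexp 3 := by
    have h2 : (2:ℝ) ≤ rexp 1 := by
      have := Real.add_one_le_exp (1:ℝ)
      linarith
    calc 2 * rexp 2 ≤ rexp 1 * rexp 2 := by nlinarith [Real.exp_pos (2:ℝ)]
      _ = rexp 3 := by rw [← Real.exp_add]; norm_num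
  calc (2 * rexp 2) ^ s / rexp (4 * (s:ℝ)) ≤ (rexp 3) ^ s / rexp (4 * (s:ℝ)) := by
        gcongr

    _ = rexp (3 * (s:ℝ)) / rexp (4 * (s:ℝ)) := by
        rw [← Real.exp_nat_mul]
        norm_num [mul_comm]
    _ = rexp (-(s:ℝ)) := by rw [← Real.exp_sub]; ring_nf

/-- ℓ¹ norm of a vector in ℝᵐ. -/
noncomputable def l1 {m : ℕ} (x : Fin m → ℝ) : ℝ := ∑ i, |x i|

/-- Law of an `s × k` random matrix with i.i.d. N(0,1) entries. -/
noncomputable def stdGaussianMatrix (s k : ℕ) : Measure (Fin s → Fin k → ℝ) :=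
  Measure.pi fun _ => Measure.pi fun _ => gaussianReal 0 1

lemma stdGaussianMatrix_eq (s k : ℕ) : stdGaussianMatrix s k = stdGaussianMatrix' s k := rfl

/-- Let `A` be an `s × k` random matrix with i.i.d. N(0,1) entries.  Then
with probability at least `1 − k e^{−s}`, every `x ∈ ℝᵏ` satisfies `‖Ax‖₁ ≤ 2s ‖x‖₁`. -/
theorem l1_operator_upper_bound_gaussian (s k : ℕ) :
    stdGaussianMatrix s k
      {A : Fin s → Fin k → ℝ | ∀ x : Fin k → ℝ,
        l1 (fun i => ∑ j, A i j * x j) ≤ 2 * s * l1 x} ≥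
    ENNReal.ofReal (1 - (k : ℝ) * Real.exp (-(s : ℝ))) := by
  classical
  have hprob : IsProbabilityMeasure (stdGaussianMatrix s k) := by
    unfold stdGaussianMatrix; infer_instance
  set U : Set (Fin s → Fin k → ℝ) := ⋃ j : Fin k, {A | 2 * (s:ℝ) < ∑ i, |A i j|} with hU
  have hUm : MeasurableSet U := MeasurableSet.iUnion fun j =>
    measurableSet_lt measurable_const (Finset.measurable_sum _ fun i _ =>
      ((measurable_pi_apply j).comp (measurable_pi_apply i)).abs)
  have hUb : stdGaussianMatrix s k U ≤ ENNReal.ofReal ((k:ℝ) * rexp (-(s:ℝ))) := by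
    calc stdGaussianMatrix s k U
        ≤ ∑ j : Fin k, stdGaussianMatrix s k {A | 2 * (s:ℝ) < ∑ i, |A i j|} :=
          measure_iUnion_fintype_le _ _
      _ ≤ ∑ _j : Fin k, ENNReal.ofReal (rexp (-(s:ℝ))) :=
          Finset.sum_le_sum fun j _ => by
            rw [stdGaussianMatrix_eq]; exact column_tail_bound s k j
      _ = (k : ℝ≥0∞) * ENNReal.ofReal (rexp (-(s:ℝ))) := by
          rw [Finset.sum_const, Finset.card_univ, Fintype.card_fin, nsmul_eq_mul]
      _ = ENNReal.ofReal ((k:ℝ) * rexp (-(s:ℝ))) := by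
          rw [ENNReal.ofReal_mul (by positivity), ENNReal.ofReal_natCast]
  have hsub : Uᶜ ⊆ {A : Fin s → Fin k → ℝ | ∀ x : Fin k → ℝ,
      l1 (fun i => ∑ j, A i j * x j) ≤ 2 * s * l1 x} := by
    intro A hA x
    simp only [hU, Set.compl_iUnion, Set.mem_iInter, Set.mem_compl_iff, Set.mem_setOf_eq,
      not_lt] at hA
    calc l1 (fun i => ∑ j, A i j * x j)
        = ∑ i, |∑ j, A i j * x j| := rfl
      _ ≤ ∑ i, ∑ j, |A i j * x j| :=
          Finset.sum_le_sum fun i _ => Finset.abs_sum_le_sum_abs _ _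
      _ = ∑ j, ∑ i, |A i j| * |x j| := by
          rw [Finset.sum_comm]
          exact Finset.sum_congr rfl fun j _ => Finset.sum_congr rfl fun i _ => abs_mul _ _
      _ = ∑ j, (∑ i, |A i j|) * |x j| := by
          exact Finset.sum_congr rfl fun j _ => (Finset.sum_mul _ _ _).symm
      _ ≤ ∑ j, (2 * (s:ℝ)) * |x j| :=
          Finset.sum_le_sum fun j _ =>
            mul_le_mul_of_nonneg_right (hA j) (abs_nonneg _)
      _ = 2 * s * l1 x := by rw [← Finset.mul_sum]; rfl
  calc ENNReal.ofReal (1 - (k : ℝ) * Real.exp (-(s : ℝ)))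
      = 1 - ENNReal.ofReal ((k:ℝ) * rexp (-(s:ℝ))) := by
        rw [ENNReal.ofReal_sub _ (by positivity), ENNReal.ofReal_one]
    _ ≤ 1 - stdGaussianMatrix s k U := tsub_le_tsub_left hUb 1
    _ = stdGaussianMatrix s k Uᶜ := (prob_compl_eq_one_sub hUm).symm
    _ ≤ _ := measure_mono hsub
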